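/- For B_T ~ Binomial(T, 1/2), E[|B_T - T/2|] / sqrt(T) converges to 1/sqrt(2*pi) as T -> infinity. -/

import Mathlib

open Finset Real

section aux
open Filter Stirling

private lemma tendsto_even_odd' {f : ℕ → ℝ} {a : ℝ}
    (he : Tendsto (fun n => f (2 * n)) atTop (nhds a))
    (ho : Tendsto (fun n => f (2 * n + 1)) atTop (nhds a)) :
    Tendsto f atTop (nhds a) := by
  rw [Filter.tendsto_def] at he ho ⊢
  intro s hs
  obtain ⟨N1, h1⟩ := Filter.mem_atTop_sets.mp (he s hs)
  obtain ⟨N2, h2⟩ := Filter.mem_atTop_sets.mp (ho s hs)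
  refine Filter.mem_atTop_sets.mpr ⟨2 * (N1 + N2) + 1, fun m hm => ?_⟩
  rcases Nat.even_or_odd m with ⟨j, hj⟩ | ⟨j, hj⟩
  · have : m = 2 * j := by omega
    rw [this]; exact h1 j (by omega)
  · rw [hj]; exact h2 j (by omega)

private lemma stirling_ratio' (n : ℕ) (hn : 1 ≤ n) :
    stirlingSeq (2 * n) / stirlingSeq n ^ 2 =
      Real.sqrt n * (Nat.centralBinom n : ℝ) / 4 ^ n := by
  have h0 : (2 * n).choose n * n.factorial * n.factorial = (2 * n).factorial := by
    have h := Nat.choose_mul_factorial_mul_factorial (show n ≤ 2 * n by omega)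
    have : 2 * n - n = n := by omega
    rwa [this] at h
  have hfac : ((2 * n).factorial : ℝ) =
      (Nat.centralBinom n : ℝ) * n.factorial * n.factorial := by
    rw [Nat.centralBinom]; exact_mod_cast h0.symm
  have hA : (0:ℝ) < n := by exact_mod_cast hn
  have hE : (0:ℝ) < Real.exp 1 := Real.exp_pos 1
  have hF : (0:ℝ) < n.factorial := by exact_mod_cast n.factorial_pos
  rw [stirlingSeq, stirlingSeq]
  push_cast
  have h4 : Real.sqrt (2 * (2 * n)) = 2 * Real.sqrt n := by
    rw [show (2:ℝ) * (2 * n) = 4 * n by ring, Real.sqrt_mul (by norm_num : (0:ℝ) ≤ 4),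
      show (4:ℝ) = 2^2 by norm_num, Real.sqrt_sq (by norm_num : (0:ℝ) ≤ 2)]
  have h2n : Real.sqrt (2 * n) = Real.sqrt 2 * Real.sqrt n :=
    Real.sqrt_mul (by norm_num) _
  have hp : ((2:ℝ) * n / Real.exp 1) ^ (2 * n) =
      4 ^ n * (((n:ℝ) / Real.exp 1) ^ n) ^ 2 := by
    calc ((2:ℝ) * n / Real.exp 1) ^ (2 * n) = (((2:ℝ) * n / Real.exp 1) ^ 2) ^ n := by
          rw [pow_mul]
      _ = ((4:ℝ) * ((n:ℝ) / Real.exp 1) ^ 2) ^ n := by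
          congr 1; rw [div_pow, div_pow]; ring
      _ = 4 ^ n * (((n:ℝ) / Real.exp 1) ^ 2) ^ n := mul_pow _ _ _
      _ = 4 ^ n * (((n:ℝ) / Real.exp 1) ^ n) ^ 2 := by
          rw [← pow_mul, ← pow_mul, mul_comm n 2]
  rw [hfac, h4, h2n, hp]
  have hsqn : (0:ℝ) < Real.sqrt n := Real.sqrt_pos.mpr hA
  have hpe : (0:ℝ) < ((n:ℝ) / Real.exp 1) ^ n := by positivity
  have hs2 : Real.sqrt 2 ^ 2 = 2 := Real.sq_sqrt (by norm_num)
  have hsn : Real.sqrt (n:ℝ) ^ 2 = n := Real.sq_sqrt hA.le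
  field_simp
  ring_nf
  rw [hs2]

private lemma centralBinom_tendsto' :
    Tendsto (fun n : ℕ => Real.sqrt n * (Nat.centralBinom n : ℝ) / 4 ^ n) atTop
      (nhds (1 / Real.sqrt π)) := by
  have h2 : Tendsto (fun n : ℕ => stirlingSeq (2 * n)) atTop (nhds (√π)) :=
    Stirling.tendsto_stirlingSeq_sqrt_pi.comp (Filter.tendsto_id.const_mul_atTop' two_pos)
  have hne : (√π) ^ 2 ≠ 0 := by positivity
  have hd := h2.div (Stirling.tendsto_stirlingSeq_sqrt_pi.pow 2) hne
  have hval : √π / (√π) ^ 2 = 1 / √π := by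
    rw [Real.sq_sqrt Real.pi_pos.le, Real.sqrt_div_self']
  rw [hval] at hd
  refine hd.congr' ?_
  filter_upwards [Filter.eventually_ge_atTop 1] with n hn
  exact stirling_ratio' n hn

private lemma telescope' (T : ℕ) (hT : 1 ≤ T) (j : ℕ) :
    ∑ k ∈ range (j + 1), (T.choose k : ℝ) * ((T:ℝ) / 2 - k) =
      (T:ℝ) / 2 * ((T - 1).choose j : ℝ) := by
  have hT' : T - 1 + 1 = T := by omega
  induction j with
  | zero => simp
  | succ j ih =>
    rw [Finset.sum_range_succ, ih]
    have h1n : T * ((T - 1).choose j) = T.choose (j + 1) * (j + 1) := by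
      simpa [Nat.succ_eq_add_one, hT'] using Nat.add_one_mul_choose_eq (T - 1) j
    have h2n : T.choose (j + 1) = (T - 1).choose j + (T - 1).choose (j + 1) := by
      simpa [Nat.succ_eq_add_one, hT'] using Nat.choose_succ_succ (T - 1) j
    have h1 : (T:ℝ) * ((T - 1).choose j : ℝ) = (T.choose (j + 1) : ℝ) * ((j:ℝ) + 1) := by
      exact_mod_cast h1n
    have h2 : (T.choose (j + 1) : ℝ) = ((T - 1).choose j : ℝ) + ((T - 1).choose (j + 1) : ℝ) := by
      exact_mod_cast h2n
    push_cast
    linear_combination ((T:ℝ) / 2) * h2 + h1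

private lemma mad_eq' (T : ℕ) (hT : 1 ≤ T) :
    ∑ k ∈ range (T + 1), (T.choose k : ℝ) * |(k : ℝ) - T / 2| =
      (T : ℝ) * ((T - 1).choose (T / 2) : ℝ) := by
  set m := T / 2 with hm
  have htel := telescope' T hT m
  have htel0 : ∑ k ∈ range (T + 1), (T.choose k : ℝ) * ((T:ℝ) / 2 - k) = 0 := by
    have h := telescope' T hT T
    rwa [Nat.choose_eq_zero_of_lt (by omega), Nat.cast_zero, mul_zero] at h
  have hIco : ∑ k ∈ Ico (m + 1) (T + 1), (T.choose k : ℝ) * ((T:ℝ) / 2 - k) =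
      -((T:ℝ) / 2 * ((T - 1).choose m : ℝ)) := by
    have hsplit := Finset.sum_range_add_sum_Ico
      (fun k => (T.choose k : ℝ) * ((T:ℝ) / 2 - k)) (show m + 1 ≤ T + 1 by omega)
    linarith [htel, htel0, hsplit]
  calc ∑ k ∈ range (T + 1), (T.choose k : ℝ) * |(k : ℝ) - T / 2|
      = ∑ k ∈ range (T + 1), (T.choose k : ℝ) * ((T:ℝ) / 2 - k)
        + ∑ k ∈ range (T + 1), (T.choose k : ℝ) * (|(k : ℝ) - T / 2| - ((T:ℝ) / 2 - (k:ℝ))) := by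
        rw [← Finset.sum_add_distrib]
        exact Finset.sum_congr rfl fun k _ => by ring
    _ = 0 + ∑ k ∈ Ico (m + 1) (T + 1),
          (T.choose k : ℝ) * (|(k : ℝ) - T / 2| - ((T:ℝ) / 2 - (k:ℝ))) := by
        rw [htel0]
        congr 1
        refine (Finset.sum_subset (fun x hx => ?_) (fun k hk hk' => ?_)).symm
        · simp only [Finset.mem_Ico, Finset.mem_range] at *; omega
        · simp only [Finset.mem_Ico, Finset.mem_range] at hk hk'
          have hkm : 2 * k ≤ T := by omega
          have hkR : 2 * (k:ℝ) ≤ (T:ℝ) := by exact_mod_cast hkm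
          have habs : |(k : ℝ) - T / 2| = (T:ℝ) / 2 - k := by
            rw [abs_of_nonpos (by linarith)]; ring
          rw [habs]; ring
    _ = ∑ k ∈ Ico (m + 1) (T + 1), (-2) * ((T.choose k : ℝ) * ((T:ℝ) / 2 - k)) := by
        rw [zero_add]
        refine Finset.sum_congr rfl fun k hk => ?_
        simp only [Finset.mem_Ico] at hk
        have hk2 : (T:ℝ) < 2 * k := by
          have : T < 2 * k := by omega
          exact_mod_cast this
        have habs : |(k : ℝ) - T / 2| = (k:ℝ) - T / 2 := by
          rw [abs_of_pos]; linarith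
        rw [habs]; ring
    _ = (-2) * ∑ k ∈ Ico (m + 1) (T + 1), (T.choose k : ℝ) * ((T:ℝ) / 2 - k) := by
        rw [Finset.mul_sum]
    _ = (T : ℝ) * ((T - 1).choose m : ℝ) := by rw [hIco]; ring

private lemma main_even :
    Tendsto (fun n : ℕ =>
      (((2 * n : ℕ) : ℝ) * (((2 * n - 1).choose ((2 * n) / 2)) : ℝ) / 2 ^ (2 * n))
        / Real.sqrt ((2 * n : ℕ) : ℝ))
      atTop (nhds (1 / Real.sqrt (2 * π))) := by
  have hlim := centralBinom_tendsto'.div_const (Real.sqrt 2)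
  have hval : 1 / √π / √2 = 1 / √(2 * π) := by
    rw [Real.sqrt_mul (by norm_num : (0:ℝ) ≤ 2), div_div, one_div, one_div, mul_comm]
  rw [hval] at hlim
  refine hlim.congr' ?_
  filter_upwards [Filter.eventually_ge_atTop 1] with n hn
  have hdiv : (2 * n) / 2 = n := by omega
  have hCBn : Nat.centralBinom n = 2 * ((2 * n - 1).choose n) := by
    have h1 : (2 * n).choose n = (2 * n - 1).choose (n - 1) + (2 * n - 1).choose n := by
      simpa [Nat.succ_eq_add_one, show 2 * n - 1 + 1 = 2 * n by omega,
        show n - 1 + 1 = n by omega] using Nat.choose_succ_succ (2 * n - 1) (n - 1)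
    have h2 : (2 * n - 1).choose (n - 1) = (2 * n - 1).choose n := by
      have := Nat.choose_symm (show n ≤ 2 * n - 1 by omega)
      rwa [show 2 * n - 1 - n = n - 1 by omega] at this
    rw [Nat.centralBinom, h1, h2]; omega
  have hA : (0:ℝ) < n := by exact_mod_cast hn
  have hsn : Real.sqrt (n:ℝ) * Real.sqrt (n:ℝ) = n := Real.mul_self_sqrt hA.le
  have hs2 : Real.sqrt 2 * Real.sqrt 2 = 2 := Real.mul_self_sqrt (by norm_num)
  have hsqn : (0:ℝ) < Real.sqrt n := Real.sqrt_pos.mpr hA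
  have hsq2 : (0:ℝ) < Real.sqrt 2 := Real.sqrt_pos.mpr (by norm_num)
  have hcast : ((2 * n : ℕ) : ℝ) = 2 * (n:ℝ) := by push_cast; ring
  have hsqrt2n : Real.sqrt ((2 * n : ℕ) : ℝ) = Real.sqrt 2 * Real.sqrt n := by
    rw [hcast, Real.sqrt_mul (by norm_num)]
  have hpow : (2:ℝ) ^ (2 * n) = 4 ^ n := by
    rw [pow_mul]; norm_num
  have hCBR : (Nat.centralBinom n : ℝ) = 2 * (((2 * n - 1).choose n) : ℝ) := by
    exact_mod_cast hCBn
  rw [hdiv, hsqrt2n, hcast, hpow]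
  set c := (((2 * n - 1).choose n) : ℝ) with hc
  rw [hCBR]
  field_simp
  linear_combination c * hsn

private lemma main_odd :
    Tendsto (fun n : ℕ =>
      (((2 * n + 1 : ℕ) : ℝ) * (((2 * n + 1 - 1).choose ((2 * n + 1) / 2)) : ℝ)
          / 2 ^ (2 * n + 1)) / Real.sqrt ((2 * n + 1 : ℕ) : ℝ))
      atTop (nhds (1 / Real.sqrt (2 * π))) := by
  have hfrac : Tendsto (fun n : ℕ => ((2 * (n:ℝ) + 1)) / n) atTop (nhds 2) := by
    have h := (tendsto_const_div_atTop_nhds_zero_nat 1).const_add (2:ℝ)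
    rw [add_zero] at h
    refine h.congr' ?_
    filter_upwards [Filter.eventually_ge_atTop 1] with n hn
    have hA : (0:ℝ) < n := by exact_mod_cast hn
    field_simp
  have hsqrtfrac : Tendsto (fun n : ℕ => Real.sqrt ((2 * (n:ℝ) + 1) / n)) atTop
      (nhds (Real.sqrt 2)) := (Real.continuous_sqrt.tendsto 2).comp hfrac
  have hfactor : Tendsto (fun n : ℕ => Real.sqrt (2 * (n:ℝ) + 1) / (2 * Real.sqrt n)) atTop
      (nhds (Real.sqrt 2 / 2)) := by
    have h := hsqrtfrac.div_const 2
    refine h.congr' ?_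
    filter_upwards [Filter.eventually_ge_atTop 1] with n hn
    have hA : (0:ℝ) < n := by exact_mod_cast hn
    rw [Real.sqrt_div (by positivity : (0:ℝ) ≤ 2 * n + 1), div_div, mul_comm]
    ring_nf
  have hlim := centralBinom_tendsto'.mul hfactor
  have hval : 1 / √π * (√2 / 2) = 1 / √(2 * π) := by
    rw [Real.sqrt_mul (by norm_num : (0:ℝ) ≤ 2) π, div_mul_div_comm, one_mul,
      div_eq_div_iff (by positivity) (by positivity)]
    nlinarith [Real.mul_self_sqrt (show (0:ℝ) ≤ 2 by norm_num), Real.sqrt_nonneg π,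
      Real.sqrt_nonneg (2 * π)]
  rw [hval] at hlim
  refine hlim.congr' ?_
  filter_upwards [Filter.eventually_ge_atTop 1] with n hn
  have hA : (0:ℝ) < n := by exact_mod_cast hn
  have hdiv : (2 * n + 1) / 2 = n := by omega
  have hsub : 2 * n + 1 - 1 = 2 * n := by omega
  have hcast : ((2 * n + 1 : ℕ) : ℝ) = 2 * (n:ℝ) + 1 := by push_cast; ring
  have hCB : (((2 * n).choose n : ℕ) : ℝ) = (Nat.centralBinom n : ℝ) := by
    rw [Nat.centralBinom]
  have hs : Real.sqrt (2 * (n:ℝ) + 1) * Real.sqrt (2 * (n:ℝ) + 1) = 2 * (n:ℝ) + 1 :=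
    Real.mul_self_sqrt (by positivity)
  have hpow : (2:ℝ) ^ (2 * n + 1) = 2 * 4 ^ n := by
    rw [pow_succ, pow_mul]; norm_num; ring
  have hsqn : (0:ℝ) < Real.sqrt n := Real.sqrt_pos.mpr hA
  have hsq1 : (0:ℝ) < Real.sqrt (2 * (n:ℝ) + 1) := Real.sqrt_pos.mpr (by positivity)
  have hsn : Real.sqrt (n:ℝ) * Real.sqrt (n:ℝ) = n := Real.mul_self_sqrt hA.le
  rw [hdiv, hsub, hCB, hcast, hpow]
  set c := (Nat.centralBinom n : ℝ) with hc
  field_simp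
  linear_combination c * hs


/-- The mean absolute deviation of `Binomial(T, 1/2)` satisfies
`E|B_T - T/2| / √T → 1/√(2π)`. -/
theorem binomial_mad_asymptotics :
    Filter.Tendsto
      (fun T : ℕ =>
        ((∑ k ∈ range (T + 1), (T.choose k : ℝ) * |(k : ℝ) - T / 2|) / 2 ^ T) / Real.sqrt T)
      Filter.atTop (nhds (1 / Real.sqrt (2 * Real.pi))) := by
  have key : Tendsto (fun T : ℕ =>
      ((T : ℝ) * (((T - 1).choose (T / 2)) : ℝ) / 2 ^ T) / Real.sqrt T) atTop
      (nhds (1 / Real.sqrt (2 * π))) := tendsto_even_odd' main_even main_odd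
  refine key.congr' ?_
  filter_upwards [Filter.eventually_ge_atTop 1] with T hT
  rw [mad_eq' T hT]
end aux
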